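/- Let A be an additive category such that for all objects X, Y the abelian group of morphisms Hom(X, Y) is finitely generated. Let X be an object of A whose endomorphism ring End(X) is isomorphic to ℤ. Then for any object Y of A that is stably isomorphic to X (i.e., X ⊕ Z ≅ Y ⊕ Z for some object Z), we have X ≅ Y. -/

import Mathlib

open CategoryTheory CategoryTheory.Limits

attribute [local instance] CategoryTheory.Limits.hasBinaryBiproducts_of_finite_biproducts

namespace StablyIsoAux

open Function

/-! ### Abelian group preliminaries -/

section AbGroup

variable {G H : Type*} [AddCommGroup G] [AddCommGroup H]

/-- Multiplication by `n` as an additive monoid hom. -/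
def smulHom (n : ℤ) (G : Type*) [AddCommGroup G] : G →+ G :=
  AddMonoidHom.mk' (fun x => n • x) (fun a b => smul_add n a b)

@[simp] lemma smulHom_apply (n : ℤ) (x : G) : smulHom n G x = n • x := rfl

/-- The `n`-torsion subgroup. -/
def torN (n : ℤ) (G : Type*) [AddCommGroup G] : AddSubgroup G := (smulHom n G).ker

lemma mem_torN {n : ℤ} {x : G} : x ∈ torN n G ↔ n • x = 0 := Iff.rfl

/-- The quotient `G / nG`. -/
abbrev quotN (n : ℤ) (G : Type*) [AddCommGroup G] := G ⧸ (smulHom n G).range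

/-- Torsion subgroups are isomorphism invariant. -/
def torCongr {n : ℤ} (e : G ≃+ H) : torN n G ≃+ torN n H where
  toFun x := ⟨e x.1, by
    have hx : n • (x : G) = 0 := x.2
    show n • (e x.1) = 0
    rw [← map_zsmul e, hx, map_zero]⟩
  invFun y := ⟨e.symm y.1, by
    have hy : n • (y : H) = 0 := y.2
    show n • (e.symm y.1) = 0
    rw [← map_zsmul e.symm, hy, map_zero]⟩
  left_inv x := by ext; simp
  right_inv y := by ext; simp
  map_add' a b := by ext; simp

lemma torN_prod (n : ℤ) : torN n (G × H) = (torN n G).prod (torN n H) := by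
  ext ⟨a, b⟩
  simp only [mem_torN, AddSubgroup.mem_prod, Prod.smul_mk, Prod.mk_eq_zero]

/-- The torsion of a product is the product of torsions. -/
noncomputable def torProd (n : ℤ) : torN n (G × H) ≃+ (torN n G) × (torN n H) := by
  refine (AddEquiv.addSubgroupCongr (torN_prod n)).trans ?_
  exact AddSubgroup.prodEquiv _ _

/-- A product quotient is the product of the quotients. -/
noncomputable def quotientProd (R : AddSubgroup G) (S : AddSubgroup H) :
    ((G × H) ⧸ R.prod S) ≃+ (G ⧸ R) × (H ⧸ S) := by
  have hker : ((QuotientAddGroup.mk' R).prodMap (QuotientAddGroup.mk' S)).ker = R.prod S := by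
    ext ⟨a, b⟩
    constructor
    · intro h
      have h1 : ((QuotientAddGroup.mk' R) a, (QuotientAddGroup.mk' S) b) = 0 := h
      rw [Prod.mk_eq_zero] at h1
      exact ⟨(QuotientAddGroup.eq_zero_iff a).mp h1.1, (QuotientAddGroup.eq_zero_iff b).mp h1.2⟩
    · rintro ⟨ha, hb⟩
      show ((QuotientAddGroup.mk' R) a, (QuotientAddGroup.mk' S) b) = 0
      rw [Prod.mk_eq_zero]
      exact ⟨(QuotientAddGroup.eq_zero_iff a).mpr ha, (QuotientAddGroup.eq_zero_iff b).mpr hb⟩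
  refine (QuotientAddGroup.quotientAddEquivOfEq hker.symm).trans ?_
  exact QuotientAddGroup.quotientKerEquivOfSurjective _
    (Surjective.prodMap (QuotientAddGroup.mk'_surjective R) (QuotientAddGroup.mk'_surjective S))

lemma range_smulHom_prod (n : ℤ) :
    (smulHom n (G × H)).range = ((smulHom n G).range).prod ((smulHom n H).range) := by
  ext q
  obtain ⟨a, b⟩ := q
  constructor
  · rintro ⟨⟨x, y⟩, h⟩
    rw [← h]
    exact ⟨⟨x, rfl⟩, ⟨y, rfl⟩⟩
  · rintro ⟨⟨x, hx⟩, ⟨y, hy⟩⟩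
    exact ⟨(x, y), Prod.ext hx hy⟩

/-- `quotN` of a product. -/
noncomputable def quotNProd (n : ℤ) : quotN n (G × H) ≃+ (quotN n G) × (quotN n H) :=
  (QuotientAddGroup.quotientAddEquivOfEq (range_smulHom_prod n)).trans
    (quotientProd _ _)

/-- `quotN` is isomorphism invariant. -/
noncomputable def quotNCongr (n : ℤ) (e : G ≃+ H) : quotN n G ≃+ quotN n H := by
  refine QuotientAddGroup.congr _ _ e ?_
  ext y
  constructor
  · rintro ⟨x, ⟨g, rfl⟩, rfl⟩
    exact ⟨e g, by simp⟩
  · rintro ⟨g, rfl⟩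
    exact ⟨smulHom n G (e.symm g), ⟨e.symm g, rfl⟩, by simp⟩

lemma finite_of_fg_of_torsion (n : ℤ) (hn : n ≠ 0) (hfg : AddGroup.FG G)
    (h : ∀ x : G, n • x = 0) : Finite G := by
  have : Module.Finite ℤ G := Module.Finite.iff_addGroup_fg.mpr hfg
  exact Module.finite_of_fg_torsion G
    (fun x => ⟨⟨n, mem_nonZeroDivisors_of_ne_zero hn⟩, h x⟩)

lemma finite_torN (n : ℤ) (hn : n ≠ 0) (hfg : AddGroup.FG G) : Finite (torN n G) := by
  have hMF : Module.Finite ℤ G := Module.Finite.iff_addGroup_fg.mpr hfg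
  have hN : IsNoetherian ℤ G := isNoetherian_of_isNoetherianRing_of_finite ℤ G
  have hfgS : (AddSubgroup.toIntSubmodule (torN n G)).FG :=
    IsNoetherian.noetherian _
  have hMS : Module.Finite ℤ (AddSubgroup.toIntSubmodule (torN n G)) :=
    Module.Finite.iff_fg.mpr hfgS
  have hfgT : AddGroup.FG (torN n G) :=
    Module.Finite.iff_addGroup_fg.mp hMS
  exact finite_of_fg_of_torsion n hn hfgT
    (fun x => by ext; exact x.2)

lemma finite_quotN (n : ℤ) (hn : n ≠ 0) (hfg : AddGroup.FG G) : Finite (quotN n G) := by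
  haveI := hfg
  have hfgQ : AddGroup.FG (quotN n G) :=
    AddGroup.fg_of_surjective (QuotientAddGroup.mk'_surjective _)
  refine finite_of_fg_of_torsion n hn hfgQ ?_
  intro q
  induction q using QuotientAddGroup.induction_on with
  | H x =>
    have : (n • x : G) ∈ (smulHom n G).range := ⟨x, rfl⟩
    rw [← QuotientAddGroup.mk_zsmul]
    exact (QuotientAddGroup.eq_zero_iff _).mpr this

lemma card_torN_int (n : ℤ) (hn : n ≠ 0) : Nat.card (torN n ℤ) = 1 := by
  rw [Nat.card_eq_one_iff_unique]
  constructor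
  · constructor
    intro a b
    ext
    have ha : n • (a : ℤ) = 0 := a.2
    have hb : n • (b : ℤ) = 0 := b.2
    rw [smul_eq_mul] at ha hb
    have ha' : (a : ℤ) = 0 := by
      rcases mul_eq_zero.mp ha with h | h
      · exact absurd h hn
      · exact h
    have hb' : (b : ℤ) = 0 := by
      rcases mul_eq_zero.mp hb with h | h
      · exact absurd h hn
      · exact h
    rw [ha', hb']
  · exact ⟨0⟩

/-- `ℤ` as functions from `Fin 1`. -/
def intEquivPi : ℤ ≃+ (Fin 1 → ℤ) where
  toFun x := fun _ => x
  invFun f := f 0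
  left_inv x := rfl
  right_inv f := by
    funext i
    have : i = 0 := Subsingleton.elim i 0
    rw [this]
  map_add' a b := rfl

lemma card_quotN_pi (r : ℕ) : Nat.card (quotN 2 (Fin r → ℤ)) = 2 ^ r := by
  classical
  let φ : (Fin r → ℤ) →+ (Fin r → ZMod 2) :=
    AddMonoidHom.mk' (fun f i => ((f i : ℤ) : ZMod 2)) (by
      intro a b; funext i; simp)
  have hker : (smulHom 2 (Fin r → ℤ)).range = φ.ker := by
    ext f
    constructor
    · rintro ⟨g, rfl⟩
      show (fun i => ((((2 : ℤ) • g) i : ℤ) : ZMod 2)) = 0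
      funext i
      show (((2 : ℤ) • g i : ℤ) : ZMod 2) = 0
      rw [smul_eq_mul, Int.cast_mul,
        show ((2 : ℤ) : ZMod 2) = 0 from by exact_mod_cast ZMod.natCast_self 2, zero_mul]
    · intro hf
      have hf' : ∀ i, ((f i : ℤ) : ZMod 2) = 0 := fun i => congrFun hf i
      have hdvd : ∀ i, (2 : ℤ) ∣ f i := by
        intro i
        have := (ZMod.intCast_zmod_eq_zero_iff_dvd (f i) 2).mp (hf' i)
        exact_mod_cast this
      refine ⟨fun i => f i / 2, ?_⟩
      funext i
      show (2 : ℤ) • (f i / 2) = f i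
      rw [smul_eq_mul]
      exact Int.mul_ediv_cancel' (hdvd i)
  have hsurj : Surjective φ := by
    intro g
    refine ⟨fun i => Classical.choose (ZMod.intCast_surjective (g i)), ?_⟩
    funext i
    exact Classical.choose_spec (ZMod.intCast_surjective (g i))
  have equiv : quotN 2 (Fin r → ℤ) ≃+ (Fin r → ZMod 2) :=
    (QuotientAddGroup.quotientAddEquivOfEq hker).trans
      (QuotientAddGroup.quotientKerEquivOfSurjective φ hsurj)
  rw [Nat.card_congr equiv.toEquiv, Nat.card_fun, Nat.card_zmod,
    Nat.card_eq_fintype_card, Fintype.card_fin]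

/-- Finitely generated torsion-free abelian groups are finite powers of `ℤ`. -/
lemma equiv_pi_int (hfg : AddGroup.FG G)
    (htf : ∀ (k : ℤ) (x : G), k • x = 0 → k = 0 ∨ x = 0) :
    ∃ r : ℕ, Nonempty (G ≃+ (Fin r → ℤ)) := by
  have : Module.Finite ℤ G := Module.Finite.iff_addGroup_fg.mpr hfg
  have : NoZeroSMulDivisors ℤ G := ⟨fun {k x} h => htf k x h⟩
  have : Module.Free ℤ G := Module.free_of_finite_type_torsion_free'
  let ι := Module.Free.ChooseBasisIndex ℤ G
  let b : Module.Basis ι ℤ G := Module.Free.chooseBasis ℤ G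
  refine ⟨Fintype.card ι, ⟨?_⟩⟩
  refine (b.equivFun.toAddEquiv).trans ?_
  exact { Equiv.arrowCongr (Fintype.equivFin ι) (Equiv.refl ℤ) with
          map_add' := fun a b => rfl }

/-- Cancellation: if `K × H ≃ G × H` with everything f.g. and `K ≃ ℤ`, then `G ≃ ℤ`. -/
theorem equiv_int_of_prod_equiv {K : Type*} [AddCommGroup K]
    (fgH : AddGroup.FG H) (fgG : AddGroup.FG G)
    (eK : K ≃+ ℤ) (e : (K × H) ≃+ (G × H)) : Nonempty (G ≃+ ℤ) := by
  -- count torsion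
  have cardtor : ∀ n : ℤ, n ≠ 0 → Nat.card (torN n G) = 1 := by
    intro n hn
    have h1 : Nat.card (torN n G) * Nat.card (torN n H)
        = Nat.card (torN n K) * Nat.card (torN n H) := by
      rw [← Nat.card_prod, ← Nat.card_congr (torProd n).toEquiv,
        ← Nat.card_congr (torCongr (n := n) e).toEquiv,
        Nat.card_congr (torProd n).toEquiv, Nat.card_prod]
    have hK : Nat.card (torN n K) = 1 := by
      rw [Nat.card_congr (torCongr (n := n) eK).toEquiv]
      exact card_torN_int n hn
    haveI : Finite (torN n H) := finite_torN n hn fgH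
    have hpos : 0 < Nat.card (torN n H) := Nat.card_pos
    rw [hK, one_mul] at h1
    exact Nat.eq_of_mul_eq_mul_right hpos (h1.trans (one_mul _).symm)
  have htf : ∀ (k : ℤ) (x : G), k • x = 0 → k = 0 ∨ x = 0 := by
    intro k x hkx
    by_cases hk : k = 0
    · exact Or.inl hk
    · right
      have := cardtor k hk
      have hsub : Subsingleton (torN k G) := (Nat.card_eq_one_iff_unique.mp this).1
      have : (⟨x, hkx⟩ : torN k G) = ⟨0, by simp [mem_torN]⟩ := Subsingleton.elim _ _
      exact congrArg Subtype.val this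
  obtain ⟨r, ⟨ω⟩⟩ := equiv_pi_int fgG htf
  -- count quotients mod 2
  have h2 : Nat.card (quotN 2 G) * Nat.card (quotN 2 H)
      = Nat.card (quotN 2 K) * Nat.card (quotN 2 H) := by
    rw [← Nat.card_prod, ← Nat.card_congr (quotNProd 2).toEquiv,
      ← Nat.card_congr (quotNCongr 2 e).toEquiv,
      Nat.card_congr (quotNProd 2).toEquiv, Nat.card_prod]
  have hKq : Nat.card (quotN 2 K) = 2 := by
    rw [Nat.card_congr (quotNCongr 2 (eK.trans intEquivPi)).toEquiv, card_quotN_pi, pow_one]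
  have hGq : Nat.card (quotN 2 G) = 2 ^ r := by
    rw [Nat.card_congr (quotNCongr 2 ω).toEquiv, card_quotN_pi]
  haveI : Finite (quotN 2 H) := finite_quotN 2 two_ne_zero fgH
  have hpos : 0 < Nat.card (quotN 2 H) := Nat.card_pos
  rw [hKq, hGq] at h2
  have hr : 2 ^ r = 2 ^ 1 := by
    have := Nat.eq_of_mul_eq_mul_right hpos h2
    simpa using this
  have : r = 1 := Nat.pow_right_injective le_rfl hr
  subst this
  exact ⟨ω.trans intEquivPi.symm⟩

/-- Cancellation to the trivial group: `D × C ≃ C` f.g. implies `D ≃ 0`. -/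
theorem subsingleton_of_prod_equiv {D C : Type*} [AddCommGroup D] [AddCommGroup C]
    (fgD : AddGroup.FG D) (fgC : AddGroup.FG C)
    (e : (D × C) ≃+ C) : Subsingleton D := by
  have cardtor : ∀ n : ℤ, n ≠ 0 → Nat.card (torN n D) = 1 := by
    intro n hn
    have h1 : Nat.card (torN n D) * Nat.card (torN n C) = Nat.card (torN n C) := by
      rw [← Nat.card_prod, ← Nat.card_congr (torProd n).toEquiv,
        Nat.card_congr (torCongr (n := n) e).toEquiv]
    haveI : Finite (torN n C) := finite_torN n hn fgC
    have hpos : 0 < Nat.card (torN n C) := Nat.card_pos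
    exact Nat.eq_of_mul_eq_mul_right hpos (h1.trans (one_mul _).symm)
  have htf : ∀ (k : ℤ) (x : D), k • x = 0 → k = 0 ∨ x = 0 := by
    intro k x hkx
    by_cases hk : k = 0
    · exact Or.inl hk
    · right
      have hsub : Subsingleton (torN k D) := (Nat.card_eq_one_iff_unique.mp (cardtor k hk)).1
      have : (⟨x, hkx⟩ : torN k D) = ⟨0, by simp [mem_torN]⟩ := Subsingleton.elim _ _
      exact congrArg Subtype.val this
  obtain ⟨r, ⟨ω⟩⟩ := equiv_pi_int fgD htf
  have h2 : Nat.card (quotN 2 D) * Nat.card (quotN 2 C) = Nat.card (quotN 2 C) := by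
    rw [← Nat.card_prod, ← Nat.card_congr (quotNProd 2).toEquiv,
      Nat.card_congr (quotNCongr 2 e).toEquiv]
  haveI : Finite (quotN 2 C) := finite_quotN 2 two_ne_zero fgC
  have hpos : 0 < Nat.card (quotN 2 C) := Nat.card_pos
  have hDq : Nat.card (quotN 2 D) = 1 :=
    Nat.eq_of_mul_eq_mul_right hpos (h2.trans (one_mul _).symm)
  rw [Nat.card_congr (quotNCongr 2 ω).toEquiv, card_quotN_pi] at hDq
  have hr : r = 0 := by
    by_contra h
    have : 2 ^ r ≥ 2 ^ 1 := Nat.pow_le_pow_right (by norm_num) (by omega)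
    omega
  subst hr
  haveI : Subsingleton (Fin 0 → ℤ) := by
    constructor
    intro a b
    funext i
    exact absurd i.2 (by omega)
  exact ω.toEquiv.subsingleton

/-! ### Cokernel machinery -/

/-- The cokernel of an additive hom. -/
abbrev cok {P Q : Type*} [AddCommGroup P] [AddCommGroup Q] (φ : P →+ Q) := Q ⧸ φ.range

/-- Cokernels of isomorphic maps are isomorphic. -/
noncomputable def cokCongr {P Q P' Q' : Type*} [AddCommGroup P] [AddCommGroup Q]
    [AddCommGroup P'] [AddCommGroup Q'] {φ : P →+ Q} {φ' : P' →+ Q'}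
    (i : P ≃+ P') (j : Q ≃+ Q') (hcomm : ∀ a, j (φ a) = φ' (i a)) :
    cok φ ≃+ cok φ' := by
  refine QuotientAddGroup.congr _ _ j ?_
  ext y
  constructor
  · rintro ⟨x, ⟨a, rfl⟩, rfl⟩
    exact ⟨i a, (hcomm a).symm⟩
  · rintro ⟨a', rfl⟩
    refine ⟨φ (i.symm a'), ⟨i.symm a', rfl⟩, ?_⟩
    have h := hcomm (i.symm a')
    rw [i.apply_symm_apply] at h
    exact h

lemma range_prodMap {P Q P' Q' : Type*} [AddCommGroup P] [AddCommGroup Q]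
    [AddCommGroup P'] [AddCommGroup Q'] (φ : P →+ Q) (φ' : P' →+ Q') :
    (φ.prodMap φ').range = φ.range.prod φ'.range := by
  ext q
  obtain ⟨a, b⟩ := q
  constructor
  · rintro ⟨⟨x, y⟩, h⟩
    rw [← h]
    exact ⟨⟨x, rfl⟩, ⟨y, rfl⟩⟩
  · rintro ⟨⟨x, hx⟩, ⟨y, hy⟩⟩
    exact ⟨(x, y), Prod.ext hx hy⟩

/-- The cokernel of a product map. -/
noncomputable def cokProd {P Q P' Q' : Type*} [AddCommGroup P] [AddCommGroup Q]
    [AddCommGroup P'] [AddCommGroup Q'] (φ : P →+ Q) (φ' : P' →+ Q') :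
    cok (φ.prodMap φ') ≃+ (cok φ) × (cok φ') :=
  (QuotientAddGroup.quotientAddEquivOfEq (range_prodMap φ φ')).trans (quotientProd _ _)

/-- The cokernel of a surjective map is trivial. -/
lemma cok_subsingleton {P Q : Type*} [AddCommGroup P] [AddCommGroup Q] (φ : P →+ Q)
    (h : Surjective φ) : Subsingleton (cok φ) := by
  have hz : ∀ c : cok φ, c = 0 := by
    intro c
    obtain ⟨x, rfl⟩ := QuotientAddGroup.mk'_surjective _ c
    obtain ⟨p, hp⟩ := h x
    exact (QuotientAddGroup.eq_zero_iff x).mpr ⟨p, hp⟩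
  exact ⟨fun a b => (hz a).trans (hz b).symm⟩

end AbGroup

/-! ### Categorical preliminaries -/

section CatAux

variable {A : Type*} [Category A] [Preadditive A] [HasFiniteBiproducts A]

/-- Maps into a biproduct. -/
noncomputable def homProdIn (W X Z : A) : (W ⟶ X ⊞ Z) ≃+ ((W ⟶ X) × (W ⟶ Z)) where
  toFun f := (f ≫ biprod.fst, f ≫ biprod.snd)
  invFun p := biprod.lift p.1 p.2
  left_inv f := by apply biprod.hom_ext <;> simp
  right_inv p := by cases p; simp
  map_add' f g := by simp [Preadditive.add_comp]

/-- Maps out of a biproduct. -/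
noncomputable def homProdOut (W X Z : A) : (X ⊞ Z ⟶ W) ≃+ ((X ⟶ W) × (Z ⟶ W)) where
  toFun f := (biprod.inl ≫ f, biprod.inr ≫ f)
  invFun p := biprod.desc p.1 p.2
  left_inv f := by apply biprod.hom_ext' <;> simp
  right_inv p := by cases p; simp
  map_add' f g := by simp [Preadditive.comp_add]

/-- Postcomposition with an isomorphism. -/
def postcompEquiv {P Q : A} (e : P ≅ Q) (W : A) : (W ⟶ P) ≃+ (W ⟶ Q) where
  toFun f := f ≫ e.hom
  invFun g := g ≫ e.inv
  left_inv f := by simp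
  right_inv g := by simp
  map_add' f g := by simp [Preadditive.add_comp]

/-- Precomposition with an isomorphism. -/
def precompEquiv {P Q : A} (e : P ≅ Q) (W : A) : (Q ⟶ W) ≃+ (P ⟶ W) where
  toFun f := e.hom ≫ f
  invFun g := e.inv ≫ g
  left_inv f := by simp
  right_inv g := by simp
  map_add' f g := by simp [Preadditive.comp_add]

/-- Precomposition with a fixed morphism, as an additive hom. -/
def precompHom {X Y : A} (u : X ⟶ Y) (W : A) : (Y ⟶ W) →+ (X ⟶ W) :=
  AddMonoidHom.mk' (fun g => u ≫ g) (fun a b => by simp [Preadditive.comp_add])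

end CatAux

end StablyIsoAux

open StablyIsoAux

/-- In an additive category with finitely generated Hom groups, if `End(X) ≅ ℤ`
then any object stably isomorphic to `X` is isomorphic to `X`. -/
theorem stmt_5 {A : Type*} [Category A] [Preadditive A] [HasFiniteBiproducts A]
    (hfg : ∀ X Y : A, AddGroup.FG (X ⟶ Y))
    (X : A) (hX : Nonempty (End X ≃+* ℤ))
    (Y Z : A) (e : X ⊞ Z ≅ Y ⊞ Z) :
    Nonempty (X ≅ Y) := by
  obtain ⟨χ⟩ := hX
  have χA : (X ⟶ X) ≃+ ℤ := χ.toAddEquiv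
  -- covariant comparison equivalences
  have covE : ∀ W : A, ((W ⟶ X) × (W ⟶ Z)) ≃+ ((W ⟶ Y) × (W ⟶ Z)) := fun W =>
    (homProdIn W X Z).symm.trans ((postcompEquiv e W).trans (homProdIn W Y Z))
  have contraE : ∀ W : A, ((X ⟶ W) × (Z ⟶ W)) ≃+ ((Y ⟶ W) × (Z ⟶ W)) := fun W =>
    (homProdOut W X Z).symm.trans ((precompEquiv e.symm W).trans (homProdOut W Y Z))
  -- Hom(X,Y) ≅ ℤ
  obtain ⟨ψ⟩ : Nonempty ((X ⟶ Y) ≃+ ℤ) :=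
    equiv_int_of_prod_equiv (hfg X Z) (hfg X Y) χA (covE X)
  -- Hom(Y,X) ≅ ℤ
  obtain ⟨φYX⟩ : Nonempty ((Y ⟶ X) ≃+ ℤ) :=
    equiv_int_of_prod_equiv (hfg Z X) (hfg Y X) χA (contraE X)
  -- End(Y) ≅ ℤ
  obtain ⟨ωY⟩ : Nonempty ((Y ⟶ Y) ≃+ ℤ) :=
    equiv_int_of_prod_equiv (hfg Y Z) (hfg Y Y) φYX (covE Y)
  -- the generator of Hom(X,Y)
  set u : X ⟶ Y := ψ.symm 1 with hu
  have hgen : ∀ f : X ⟶ Y, f = (ψ f) • u := by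
    intro f
    have : ψ.symm ((ψ f) • (1 : ℤ)) = (ψ f) • ψ.symm 1 := map_zsmul ψ.symm (ψ f) 1
    rw [smul_eq_mul, mul_one] at this
    rw [hu, ← this, ψ.symm_apply_apply]
  -- θ_Y is surjective
  have surjθY : Function.Surjective (precompHom u Y) := by
    intro f
    refine ⟨(ψ f) • 𝟙 Y, ?_⟩
    show u ≫ ((ψ f) • 𝟙 Y) = f
    rw [Preadditive.comp_zsmul, Category.comp_id, ← hgen f]
  -- θ_Y is injective
  have injθY : Function.Injective (precompHom u Y) := by
    set F : ℤ →+ ℤ :=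
      (ψ.toAddMonoidHom.comp ((precompHom u Y).comp ωY.symm.toAddMonoidHom)) with hF
    have hFval : ∀ k : ℤ, F k = k * F 1 := by
      intro k
      have : F (k • (1 : ℤ)) = k • F 1 := map_zsmul F k 1
      rw [smul_eq_mul, mul_one] at this
      rw [this, smul_eq_mul]
    have hFsurj : Function.Surjective F := by
      intro m
      obtain ⟨g, hg⟩ := surjθY (ψ.symm m)
      exact ⟨ωY g, by simp [hF, hg]⟩
    obtain ⟨k, hk⟩ := hFsurj 1
    rw [hFval k] at hk
    have hF1 : F 1 ≠ 0 := by
      intro h; rw [h, mul_zero] at hk; exact one_ne_zero hk.symm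
    intro g g' hgg
    have h1 : F (ωY g) = F (ωY g') := by
      simp only [hF, AddMonoidHom.comp_apply, AddEquiv.coe_toAddMonoidHom,
        AddEquiv.symm_apply_apply]
      rw [hgg]
    rw [hFval (ωY g), hFval (ωY g')] at h1
    have := mul_right_cancel₀ hF1 h1
    exact ωY.injective this
  -- now the cokernel comparison to prove θ_X surjective
  have surjθX : Function.Surjective (precompHom u X) := by
    -- coker θ_{X⊞Z} ≃ coker θ_X × coker θ_Z
    have c1 : cok (precompHom u (X ⊞ Z)) ≃+ (cok (precompHom u X)) × (cok (precompHom u Z)) := by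
      refine (cokCongr (φ := precompHom u (X ⊞ Z))
        (φ' := (precompHom u X).prodMap (precompHom u Z))
        (homProdIn Y X Z) (homProdIn X X Z) ?_).trans (cokProd _ _)
      intro f
      show ((u ≫ f) ≫ biprod.fst, (u ≫ f) ≫ biprod.snd)
        = (u ≫ (f ≫ biprod.fst), u ≫ (f ≫ biprod.snd))
      simp
    have c2 : cok (precompHom u (Y ⊞ Z)) ≃+ (cok (precompHom u Y)) × (cok (precompHom u Z)) := by
      refine (cokCongr (φ := precompHom u (Y ⊞ Z))
        (φ' := (precompHom u Y).prodMap (precompHom u Z))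
        (homProdIn Y Y Z) (homProdIn X Y Z) ?_).trans (cokProd _ _)
      intro f
      show ((u ≫ f) ≫ biprod.fst, (u ≫ f) ≫ biprod.snd)
        = (u ≫ (f ≫ biprod.fst), u ≫ (f ≫ biprod.snd))
      simp
    have c0 : cok (precompHom u (X ⊞ Z)) ≃+ cok (precompHom u (Y ⊞ Z)) := by
      refine cokCongr (postcompEquiv e Y) (postcompEquiv e X) ?_
      intro f
      show (u ≫ f) ≫ e.hom = u ≫ (f ≫ e.hom)
      simp
    haveI : Subsingleton (cok (precompHom u Y)) := cok_subsingleton _ surjθY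
    haveI : Unique (cok (precompHom u Y)) := uniqueOfSubsingleton 0
    have call : (cok (precompHom u X)) × (cok (precompHom u Z)) ≃+ cok (precompHom u Z) :=
      (c1.symm.trans (c0.trans c2)).trans AddEquiv.uniqueProd
    have fgD : AddGroup.FG (cok (precompHom u X)) := by
      haveI := hfg X X
      exact AddGroup.fg_of_surjective (QuotientAddGroup.mk'_surjective _)
    have fgC : AddGroup.FG (cok (precompHom u Z)) := by
      haveI := hfg X Z
      exact AddGroup.fg_of_surjective (QuotientAddGroup.mk'_surjective _)
    haveI : Subsingleton (cok (precompHom u X)) :=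
      subsingleton_of_prod_equiv fgD fgC call
    intro b
    have hb : (QuotientAddGroup.mk b : cok (precompHom u X)) = 0 := Subsingleton.elim _ _
    exact (QuotientAddGroup.eq_zero_iff b).mp hb
  obtain ⟨v, hv⟩ := surjθX (𝟙 X)
  have hv' : u ≫ v = 𝟙 X := hv
  have hvu : v ≫ u = 𝟙 Y := by
    apply injθY
    show u ≫ (v ≫ u) = u ≫ 𝟙 Y
    rw [← Category.assoc, hv', Category.id_comp, Category.comp_id]
  exact ⟨⟨u, v, hv', hvu⟩⟩
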